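/- For 0 < α ≤ 1 and c > 0, if the maximum bucket size is ⌈K·log₂(n)/c⌉ and the table has n/α slots with at most n occupied so the load never exceeds α, then the per-bucket expected number of trials (1/(1−α))^{⌈K log₂ n/c⌉} is at most (1/(1−α))·n^{(K/c)·log₂(1/(1−α))}; summing over m = ⌈cn/log₂ n⌉ buckets gives total expected trials O(n^{1+(K/c)·log₂(1/(1−α))}). -/

import Mathlib

lemma stb_aux (α c K : ℝ) (hα0 : 0 < α) (hα1 : α < 1)
    (hc : 0 < c) (hK : 0 < K) :
    ∀ n : ℕ, 2 ≤ n →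
      (1 / (1 - α)) ^ ⌈K * Real.logb 2 n / c⌉₊
        ≤ (1 / (1 - α)) * (n : ℝ) ^ ((K / c) * Real.logb 2 (1 / (1 - α))) := by
  intro n hn
  set b : ℝ := 1 / (1 - α) with hb
  have h1α : (0:ℝ) < 1 - α := by linarith
  have hb1 : 1 < b := by
    rw [hb, lt_div_iff₀ h1α]; linarith
  have hb0 : (0:ℝ) < b := by linarith
  have hn1 : (1:ℝ) < (n:ℝ) := by exact_mod_cast Nat.lt_of_lt_of_le one_lt_two hn
  have hn0 : (0:ℝ) < (n:ℝ) := by linarith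
  have hlogn : 0 < Real.logb 2 n := Real.logb_pos one_lt_two hn1
  set t : ℝ := K * Real.logb 2 n / c with ht
  have ht0 : 0 ≤ t := by positivity
  have hceil : (⌈t⌉₊ : ℝ) ≤ t + 1 := le_of_lt (Nat.ceil_lt_add_one ht0)
  have step1 : b ^ ⌈t⌉₊ ≤ b ^ (t + 1) := by
    rw [← Real.rpow_natCast b ⌈t⌉₊]
    exact Real.rpow_le_rpow_left_iff hb1 |>.mpr hceil
  have key : b ^ t = (n : ℝ) ^ ((K / c) * Real.logb 2 b) := by
    rw [Real.rpow_def_of_pos hb0, Real.rpow_def_of_pos hn0]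
    congr 1
    have hlog2 : Real.log 2 ≠ 0 := ne_of_gt (Real.log_pos one_lt_two)
    rw [ht, Real.logb, Real.logb]
    field_simp
  calc b ^ ⌈t⌉₊ ≤ b ^ (t + 1) := step1
    _ = b * b ^ t := by rw [Real.rpow_add hb0, Real.rpow_one]; ring
    _ = b * (n : ℝ) ^ ((K / c) * Real.logb 2 b) := by rw [key]

theorem search_time_bound (α c K : ℝ) (hα0 : 0 < α) (hα1 : α < 1)
    (hc : 0 < c) (hK : 0 < K) :
    (∀ n : ℕ, 2 ≤ n →
      (1 / (1 - α)) ^ ⌈K * Real.logb 2 n / c⌉₊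
        ≤ (1 / (1 - α)) * (n : ℝ) ^ ((K / c) * Real.logb 2 (1 / (1 - α)))) ∧
    ∃ C : ℝ, 0 < C ∧ ∀ n : ℕ, 2 ≤ n →
      (⌈c * n / Real.logb 2 n⌉₊ : ℝ) * (1 / (1 - α)) ^ ⌈K * Real.logb 2 n / c⌉₊
        ≤ C * (n : ℝ) ^ (1 + (K / c) * Real.logb 2 (1 / (1 - α))) := by
  have h1α : (0:ℝ) < 1 - α := by linarith
  have hb1 : 1 < 1 / (1 - α) := by rw [lt_div_iff₀ h1α]; linarith
  have hb0 : (0:ℝ) < 1 / (1 - α) := by linarith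
  refine ⟨stb_aux α c K hα0 hα1 hc hK, (c + 1) * (1 / (1 - α)), by positivity, ?_⟩
  intro n hn
  have hn1 : (1:ℝ) < (n:ℝ) := by exact_mod_cast Nat.lt_of_lt_of_le one_lt_two hn
  have hn0 : (0:ℝ) < (n:ℝ) := by linarith
  have hlogn : 1 ≤ Real.logb 2 n := by
    rw [show (1:ℝ) = Real.logb 2 2 by simp]
    exact Real.logb_le_logb_of_le one_lt_two (by norm_num) (by exact_mod_cast hn)
  have hlogn0 : 0 < Real.logb 2 n := by linarith
  -- bound on number of buckets
  have hm : (⌈c * n / Real.logb 2 n⌉₊ : ℝ) ≤ (c + 1) * n := by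
    have h1 : c * n / Real.logb 2 n ≤ c * n := by
      rw [div_le_iff₀ hlogn0]
      nlinarith [mul_pos hc hn0]
    have h2 : (⌈c * n / Real.logb 2 n⌉₊ : ℝ) ≤ c * n / Real.logb 2 n + 1 :=
      le_of_lt (Nat.ceil_lt_add_one (by positivity))
    nlinarith
  have hper := stb_aux α c K hα0 hα1 hc hK n hn
  have hpow0 : (0:ℝ) < (1 / (1 - α)) ^ ⌈K * Real.logb 2 n / c⌉₊ := by positivity
  have hm0 : (0:ℝ) ≤ (⌈c * n / Real.logb 2 n⌉₊ : ℝ) := Nat.cast_nonneg _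
  calc (⌈c * n / Real.logb 2 n⌉₊ : ℝ) * (1 / (1 - α)) ^ ⌈K * Real.logb 2 n / c⌉₊
      ≤ ((c + 1) * n) * ((1 / (1 - α)) * (n : ℝ) ^ ((K / c) * Real.logb 2 (1 / (1 - α)))) := by
        apply mul_le_mul hm hper (le_of_lt hpow0) (by positivity)
    _ = (c + 1) * (1 / (1 - α)) * ((n:ℝ) * (n : ℝ) ^ ((K / c) * Real.logb 2 (1 / (1 - α)))) := by ring
    _ = (c + 1) * (1 / (1 - α)) * (n : ℝ) ^ (1 + (K / c) * Real.logb 2 (1 / (1 - α))) := by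
        rw [Real.rpow_add hn0, Real.rpow_one]
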